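/- Let T be a Z/n-linear triangulated category, i.e. n·id_X = 0 for every object X. Then every object of T has n-order ≥ k for every natural number k (i.e. infinite n-order). -/

import Mathlib

open CategoryTheory CategoryTheory.Limits CategoryTheory.Pretriangulated

universe v u

/-- The inductive "n-order ≥ k" predicate on objects of a triangulated category. -/
def nOrderGE (C : Type u) [Category.{v} C] [HasZeroObject C] [Preadditive C] [HasShift C ℤ]
    [∀ i : ℤ, (shiftFunctor C i).Additive] [Pretriangulated C]
    (n : ℕ) : ℕ → C → Prop
  | 0, _ => True
  | k + 1, X => ∀ ⦃K Kn : C⦄ (π : K ⟶ Kn) (δ : Kn ⟶ K⟦(1 : ℤ)⟧),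
      (Triangle.mk (n • 𝟙 K) π δ ∈ distTriang C) →
      ∀ f : K ⟶ X, ∃ fb : Kn ⟶ X, π ≫ fb = f ∧
        ∃ (Cf : C) (g : X ⟶ Cf) (h : Cf ⟶ Kn⟦(1 : ℤ)⟧),
          (Triangle.mk fb g h ∈ distTriang C) ∧ nOrderGE C n k Cf

/-- In a `ℤ/n`-linear triangulated category (i.e. `n • 𝟙 X = 0` for
every object `X`), every object has `n`-order `≥ k` for every `k`. -/
theorem nOrderGE_of_nsmul_id_zero
    {C : Type u} [Category.{v} C] [HasZeroObject C] [Preadditive C] [HasShift C ℤ]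
    [∀ i : ℤ, (shiftFunctor C i).Additive] [Pretriangulated C]
    (n : ℕ) (hn : 1 ≤ n) (hlin : ∀ X : C, n • 𝟙 X = 0) :
    ∀ (X : C) (k : ℕ), nOrderGE C n k X := by
  intro X k
  induction k generalizing X with
  | zero => trivial
  | succ k ih =>
    intro K Kn π δ hT f
    obtain ⟨fb, hfb⟩ := Triangle.yoneda_exact₂ _ hT f (by simp [hlin K]; exact (Preadditive.rightComp _ f).map_zero)
    obtain ⟨Cf, g, h, hT'⟩ := distinguished_cocone_triangle fb
    exact ⟨fb, hfb.symm, Cf, g, h, hT', ih Cf⟩
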